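/- Let H be a coalgebra over ℤ and p a prime, and suppose {Z_α : α ∈ ℤ_{≥0}^{(I)}} are elements of H/pH satisfying Δ(Z_α) = Σ_{0≤β≤α} Z_β ⊗ Z_{α−β}. Then the Verschiebung (shift) operator V_p on H/pH satisfies V_p(Z_α) = Z_{α/p}, where Z_{α/p} = 0 if p does not divide every coordinate of α. -/

import Mathlib

open TensorProduct Coalgebra

section
variable {R H : Type*} [CommRing R] [AddCommGroup H] [Module R H] [Coalgebra R H]

/-- Convolution product on the dual algebra `H*` of a coalgebra `H`:
`(f * g)(x) = (f ⊗ g)(Δ x)`. -/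
noncomputable def convMul (f g : H →ₗ[R] R) : H →ₗ[R] R :=
  LinearMap.mul' R R ∘ₗ TensorProduct.map f g ∘ₗ comul (R := R)

/-- Convolution powers `f^n` in the dual algebra, with `f^0 = ε`. -/
noncomputable def convPow (f : H →ₗ[R] R) : ℕ → (H →ₗ[R] R)
  | 0 => counit (R := R)
  | n + 1 => convMul (convPow f n) f
end

/-- Lemma 2.11: if `Z_α` (`α ∈ ℤ_{≥0}^{(I)}`) are elements of a coalgebra `H` over
`𝔽_p = ZMod p` satisfying the structural relations, and `V` is the Verschiebung (the
operator dual to the Frobenius `f ↦ f^p` on the dual algebra `H*`), then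
`V(Z_α) = Z_{α/p}`, where `Z_{α/p} = 0` if `p` does not divide `α`. -/
theorem verschiebung_structural
    (p : ℕ) (hp : p.Prime) (H I : Type*) [DecidableEq I] [AddCommGroup H]
    [Module (ZMod p) H] [Coalgebra (ZMod p) H]
    (Z : (I →₀ ℕ) → H)
    (hZ : ∀ α : I →₀ ℕ,
      comul (R := ZMod p) (Z α) = ∑ q ∈ Finset.HasAntidiagonal.antidiagonal α, Z q.1 ⊗ₜ[ZMod p] Z q.2)
    (hZc : ∀ α : I →₀ ℕ, counit (R := ZMod p) (Z α) = if α = 0 then 1 else 0)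
    (V : H →ₗ[ZMod p] H)
    (hV : ∀ (f : H →ₗ[ZMod p] ZMod p) (x : H), f (V x) = convPow f p x) :
    ∀ α : I →₀ ℕ,
      (∀ β : I →₀ ℕ, α = p • β → V (Z α) = Z β) ∧
      ((∀ β : I →₀ ℕ, α ≠ p • β) → V (Z α) = 0) := by
  classical
  haveI : Fact p.Prime := ⟨hp⟩
  -- main computation: for every functional f, f (V (Z α)) is f (Z β) or 0
  have main : ∀ (f : H →ₗ[ZMod p] ZMod p) (α : I →₀ ℕ),
      f (V (Z α)) = ∑ d ∈ Finset.Iic α, (if p • d = α then f (Z d) else 0) := by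
    intro f α
    obtain ⟨g, hg⟩ : ∃ g : MvPowerSeries I (ZMod p),
        ∀ d, MvPowerSeries.coeff d g = f (Z d) := ⟨fun d => f (Z d), fun _ => rfl⟩
    -- Step 1: convPow f n (Z α) = coeff α (g ^ n)
    have key : ∀ (n : ℕ) (α : I →₀ ℕ),
        convPow f n (Z α) = MvPowerSeries.coeff α (g ^ n) := by
      intro n
      induction n with
      | zero =>
        intro α
        show counit (R := ZMod p) (Z α) = _
        rw [hZc, pow_zero, MvPowerSeries.coeff_one]
      | succ n ih =>
        intro α
        show convMul (convPow f n) f (Z α) = _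
        rw [pow_succ, MvPowerSeries.coeff_mul]
        simp only [convMul, LinearMap.comp_apply, hZ, map_sum, TensorProduct.map_tmul,
          LinearMap.mul'_apply]
        exact Finset.sum_congr rfl fun q _ => by rw [ih, hg]
    -- Step 2: truncate g to a polynomial below α
    set φ : MvPolynomial I (ZMod p) :=
      ∑ d ∈ Finset.Iic α, MvPolynomial.monomial d (f (Z d)) with hφ
    have hφc : ∀ d ≤ α, MvPolynomial.coeff d φ = f (Z d) := by
      intro d hd
      rw [hφ, MvPolynomial.coeff_sum]
      rw [Finset.sum_eq_single d (fun b _ hb => by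
        rw [MvPolynomial.coeff_monomial, if_neg hb]) (fun hds => by
        exact absurd (Finset.mem_Iic.2 hd) hds)]
      rw [MvPolynomial.coeff_monomial, if_pos rfl]
    have hgp : MvPowerSeries.coeff α (g ^ p) = MvPolynomial.coeff α (φ ^ p) := by
      rw [← MvPolynomial.coeff_coe, MvPolynomial.coe_pow, MvPowerSeries.coeff_pow,
        MvPowerSeries.coeff_pow]
      refine Finset.sum_congr rfl fun l hl => Finset.prod_congr rfl fun i hi => ?_
      have hli : l i ≤ α := by
        rw [Finset.mem_finsuppAntidiag] at hl
        rw [← hl.1]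
        exact Finset.single_le_sum (f := fun j => l j) (fun j _ => zero_le) hi
      rw [hg, MvPolynomial.coeff_coe, hφc _ hli]
    -- Step 3: Frobenius in char p
    have hφp : φ ^ p = ∑ d ∈ Finset.Iic α, MvPolynomial.monomial (p • d) (f (Z d)) := by
      rw [hφ, sum_pow_char]
      refine Finset.sum_congr rfl fun d _ => ?_
      rw [MvPolynomial.monomial_pow, ZMod.pow_card]
    -- Put everything together
    rw [hV, key p α, hgp, hφp, MvPolynomial.coeff_sum]
    exact Finset.sum_congr rfl fun d _ => by rw [MvPolynomial.coeff_monomial]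
  intro α
  have smul_inj : ∀ d β : I →₀ ℕ, p • d = p • β → d = β := by
    intro d β h
    ext i
    have := DFunLike.congr_fun h i
    simp only [Finsupp.smul_apply, smul_eq_mul] at this
    exact Nat.eq_of_mul_eq_mul_left hp.pos this
  constructor
  · intro β hβ
    rw [← sub_eq_zero]
    rw [← Module.forall_dual_apply_eq_zero_iff (ZMod p)]
    intro f
    have hβα : β ≤ α := by
      rw [hβ, Finsupp.le_def]
      intro i
      simp only [Finsupp.smul_apply, smul_eq_mul]
      exact Nat.le_mul_of_pos_left _ hp.pos
    rw [map_sub, main, Finset.sum_eq_single β (fun b _ hb => by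
        rw [if_neg (fun hc => hb (smul_inj b β (hc.trans hβ)))]) (fun hβs => by
        exact absurd (Finset.mem_Iic.2 hβα) hβs), if_pos hβ.symm, sub_self]
  · intro hβ
    rw [← Module.forall_dual_apply_eq_zero_iff (ZMod p)]
    intro f
    rw [main, Finset.sum_eq_zero fun d _ => by rw [if_neg fun hc => hβ d hc.symm]]
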